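/- arXiv:1210.0996 — 2 statements merged into one kernel-verified Lean document; each statement's English description precedes it below -/
import Mathlib

section
/- Let k be a field. A chain map f : C → D of non-negatively graded chain complexes over k such that f_l : C_l → D_l is surjective for every l ≥ 1 has the right lifting property with respect to the map j^p : 0 → D^p for every p ≥ 1. -/
open CategoryTheory Limits

/-- Let `k` be a field.  A chain map `f : C ⟶ D` of non-negatively
graded chain complexes over `k` such that `f_l : C_l → D_l` is surjective for every
`l ≥ 1` has the right lifting property with respect to the map `j^p : 0 → D^p` for
every `p ≥ 1`.  Here `D^p` is the complex with `k` in degrees `p` and `p - 1` and the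
identity (an isomorphism) as differential between them, and `j^p` is the unique map
from the zero complex. -/
theorem stmt_6 (k : Type) [Field k]
    (C D : ChainComplex (ModuleCat k) ℕ) (f : C ⟶ D)
    (hf : ∀ l, 1 ≤ l → Function.Surjective (f.f l))
    (p : ℕ) (hp : 1 ≤ p)
    (Z Dp : ChainComplex (ModuleCat k) ℕ)
    (hZ : ∀ n, IsZero (Z.X n))
    (hXp : Dp.X p = ModuleCat.of k k)
    (hXp' : Dp.X (p - 1) = ModuleCat.of k k)
    (hzero : ∀ l, l ≠ p → l ≠ p - 1 → IsZero (Dp.X l))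
    (hd : IsIso (Dp.d p (p - 1)))
    (j : Z ⟶ Dp) :
    HasLiftingProperty j f := by
  obtain ⟨q, rfl⟩ : ∃ q, p = q + 1 := ⟨p - 1, by omega⟩
  simp only [Nat.add_sub_cancel] at hXp' hzero
  haveI : IsIso (Dp.d (q + 1) q) := hd
  constructor
  intro top bottom sq
  -- a section of `f.f (q+1)` over `bottom.f (q+1)`
  obtain ⟨s, hs⟩ : ∃ s : Dp.X (q + 1) ⟶ C.X (q + 1), s ≫ f.f (q + 1) = bottom.f (q + 1) := by
    obtain ⟨s, hs⟩ :=
      Module.projective_lifting_property (R := k) (f.f (q + 1)).hom (bottom.f (q + 1)).hom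
        (hf (q + 1) (by omega))
    exact ⟨ModuleCat.ofHom s, ModuleCat.hom_ext hs⟩
  have hs' : (s : Dp.X (q + 1) ⟶ C.X (q + 1)) ≫ f.f (q + 1) = bottom.f (q + 1) := hs
  -- the lift, defined degreewise
  set lf : ∀ n, Dp.X n ⟶ C.X n := fun n =>
    if h : n = q + 1 then
      eqToHom (congrArg Dp.X h) ≫ (s : Dp.X (q + 1) ⟶ C.X (q + 1)) ≫
        eqToHom (congrArg C.X h.symm)
    else if h' : n = q then
      eqToHom (congrArg Dp.X h') ≫ inv (Dp.d (q + 1) q) ≫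
        (s : Dp.X (q + 1) ⟶ C.X (q + 1)) ≫ C.d (q + 1) q ≫ eqToHom (congrArg C.X h'.symm)
    else 0 with hlf
  refine ⟨⟨⟨{ f := lf, comm' := ?_ }, ?_, ?_⟩⟩⟩
  · intro i n hin
    change n + 1 = i at hin
    subst hin
    simp only [hlf]
    by_cases h1 : n + 1 = q + 1
    · obtain rfl : n = q := by omega
      rw [dif_pos rfl, dif_neg (by omega), dif_pos rfl]
      simp
    · by_cases h2 : n + 1 = q
      · subst h2
        rw [dif_neg h1, dif_pos rfl, dif_neg (by omega), dif_neg (by omega)]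
        have hdd : C.d (n + 1 + 1) (n + 1) ≫ C.d (n + 1) n = 0 := C.d_comp_d _ _ _
        simp [hdd]
      · exact (hzero (n + 1) h1 h2).eq_of_src _ _
  · -- `j ≫ lift = top`: both start at the zero complex
    apply HomologicalComplex.hom_ext
    intro n
    exact (hZ n).eq_of_src _ _
  · -- `lift ≫ f = bottom`
    apply HomologicalComplex.hom_ext
    intro n
    rw [HomologicalComplex.comp_f]
    simp only [hlf]
    by_cases h1 : n = q + 1
    · subst h1
      rw [dif_pos rfl]
      simpa using hs'
    · by_cases h2 : n = q
      · subst h2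
        rw [dif_neg h1, dif_pos rfl]
        simp only [eqToHom_refl, Category.comp_id, Category.id_comp, Category.assoc]
        have hcf : C.d (n + 1) n ≫ f.f n = f.f (n + 1) ≫ D.d (n + 1) n :=
          (f.comm (n + 1) n).symm
        have hcg : Dp.d (n + 1) n ≫ bottom.f n = bottom.f (n + 1) ≫ D.d (n + 1) n :=
          (bottom.comm (n + 1) n).symm
        rw [hcf]
        slice_lhs 2 3 => rw [hs']
        rw [← hcg, IsIso.inv_hom_id_assoc]
      · exact (hzero n h1 h2).eq_of_src _ _
end

section
/- In a left proper model category M, for any weak equivalence f : X → Y, the adjunction between under categories P_f : X/M ⇄ Y/M : U_f, where P_f(Z) = Y ∪_X Z (pushout along f) and U_f precomposes with f, is a Quillen equivalence. -/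
open CategoryTheory Limits

universe v u

/-- A (Quillen) model structure on a category `M`: three classes of morphisms — weak
equivalences, fibrations and cofibrations — satisfying two-out-of-three, closure
under retracts, the lifting axioms, and the factorization axioms. -/
structure ModelStructure (M : Type u) [Category.{v} M] : Type (max u v) where
  W : MorphismProperty M
  Fib : MorphismProperty M
  Cof : MorphismProperty M
  two_of_three : ∀ {X Y Z : M} (f : X ⟶ Y) (g : Y ⟶ Z),
    (W f → W g → W (f ≫ g)) ∧ (W f → W (f ≫ g) → W g) ∧ (W g → W (f ≫ g) → W f)
  retract_stable : ∀ {A B C D : M} (f : A ⟶ B) (g : C ⟶ D)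
    (i : A ⟶ C) (r : C ⟶ A) (j : B ⟶ D) (s : D ⟶ B),
    i ≫ r = 𝟙 A → j ≫ s = 𝟙 B → i ≫ g = f ≫ j → g ≫ s = r ≫ f →
    (W g → W f) ∧ (Fib g → Fib f) ∧ (Cof g → Cof f)
  lift_trivCof_fib : ∀ {A B X Y : M} (i : A ⟶ B) (p : X ⟶ Y),
    Cof i → W i → Fib p → HasLiftingProperty i p
  lift_cof_trivFib : ∀ {A B X Y : M} (i : A ⟶ B) (p : X ⟶ Y),
    Cof i → Fib p → W p → HasLiftingProperty i p
  fact_cof_trivFib : ∀ {X Y : M} (f : X ⟶ Y),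
    ∃ (Z : M) (i : X ⟶ Z) (p : Z ⟶ Y), Cof i ∧ Fib p ∧ W p ∧ i ≫ p = f
  fact_trivCof_fib : ∀ {X Y : M} (f : X ⟶ Y),
    ∃ (Z : M) (i : X ⟶ Z) (p : Z ⟶ Y), Cof i ∧ W i ∧ Fib p ∧ i ≫ p = f

variable {M : Type u} [Category.{v} M]

/-- A model structure is left proper if the pushout of a weak equivalence along a
cofibration is again a weak equivalence. -/
def LeftProper (S : ModelStructure M) : Prop :=
  ∀ {A B C D : M} (w : A ⟶ B) (c : A ⟶ C) (x : B ⟶ D) (w' : C ⟶ D),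
    IsPushout w c x w' → S.W w → S.Cof c → S.W w'

/-- The comma (under-category) model structure on `Under X` induced by a model
structure on `M`: a morphism is a weak equivalence / fibration / cofibration iff its
underlying morphism in `M` is one. -/
def IsCommaStructure (S : ModelStructure M) {X : M} (T : ModelStructure (Under X)) : Prop :=
  (∀ {A B : Under X} (f : A ⟶ B), T.W f ↔ S.W f.right) ∧
  (∀ {A B : Under X} (f : A ⟶ B), T.Fib f ↔ S.Fib f.right) ∧
  (∀ {A B : Under X} (f : A ⟶ B), T.Cof f ↔ S.Cof f.right)

/-- A left adjoint functor between model categories is a left Quillen functor (so the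
adjunction is a Quillen adjunction) if it preserves cofibrations and trivial
cofibrations. -/
def IsLeftQuillen {N : Type u} [Category.{v} N]
    (S : ModelStructure M) (T : ModelStructure N) (F : M ⥤ N) : Prop :=
  (∀ {A B : M} (f : A ⟶ B), S.Cof f → T.Cof (F.map f)) ∧
  (∀ {A B : M} (f : A ⟶ B), S.Cof f → S.W f → T.Cof (F.map f) ∧ T.W (F.map f))

/-- Lifting properties pass to pushouts: if `i` has the LLP against `p`, and `j` is a
pushout of `i` (along `a`), then `j` has the LLP against `p`. -/
lemma llp_of_isPushout {Z W V P : M} {a : Z ⟶ W} {i : Z ⟶ V} {j : W ⟶ P} {b : V ⟶ P}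
    (sq : IsPushout a i j b) {X Y : M} (p : X ⟶ Y) (h : HasLiftingProperty i p) :
    HasLiftingProperty j p := by
  constructor
  intro u v csq
  have csq' : CommSq (a ≫ u) i p (b ≫ v) := ⟨by
    rw [Category.assoc, csq.w, ← Category.assoc, sq.w, Category.assoc]⟩
  obtain ⟨⟨l⟩⟩ := h.sq_hasLift csq'
  refine ⟨⟨⟨sq.desc u l.l l.fac_left.symm, sq.inl_desc _ _ _, ?_⟩⟩⟩
  apply sq.hom_ext
  · rw [← Category.assoc, sq.inl_desc, csq.w]
  · rw [← Category.assoc, sq.inr_desc, l.fac_right]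

/-- Cofibrations are stable under pushout (retract argument). -/
lemma cof_of_isPushout (S : ModelStructure M) {Z W V P : M} {a : Z ⟶ W} {i : Z ⟶ V}
    {j : W ⟶ P} {b : V ⟶ P} (sq : IsPushout a i j b) (hi : S.Cof i) : S.Cof j := by
  obtain ⟨E, c, p, hc, hpF, hpW, hcp⟩ := S.fact_cof_trivFib j
  have hlp : HasLiftingProperty j p :=
    llp_of_isPushout sq p (S.lift_cof_trivFib i p hi hpF hpW)
  have csq : CommSq c j p (𝟙 P) := ⟨by rw [hcp, Category.comp_id]⟩
  obtain ⟨⟨l⟩⟩ := hlp.sq_hasLift csq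
  exact (S.retract_stable j c (𝟙 W) (𝟙 W) l.l p (Category.comp_id _) l.fac_right
    (by rw [Category.id_comp, l.fac_left]) (by rw [hcp, Category.id_comp])).2.2 hc

/-- Trivial cofibrations are stable under pushout (retract argument). -/
lemma trivCof_of_isPushout (S : ModelStructure M) {Z W V P : M} {a : Z ⟶ W} {i : Z ⟶ V}
    {j : W ⟶ P} {b : V ⟶ P} (sq : IsPushout a i j b) (hi : S.Cof i) (hiW : S.W i) :
    S.Cof j ∧ S.W j := by
  obtain ⟨E, c, p, hc, hcW, hpF, hcp⟩ := S.fact_trivCof_fib j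
  have hlp : HasLiftingProperty j p :=
    llp_of_isPushout sq p (S.lift_trivCof_fib i p hi hiW hpF)
  have csq : CommSq c j p (𝟙 P) := ⟨by rw [hcp, Category.comp_id]⟩
  obtain ⟨⟨l⟩⟩ := hlp.sq_hasLift csq
  have hr := S.retract_stable j c (𝟙 W) (𝟙 W) l.l p (Category.comp_id _) l.fac_right
    (by rw [Category.id_comp, l.fac_left]) (by rw [hcp, Category.id_comp])
  exact ⟨hr.2.2 hc, hr.1 hcW⟩

/-- The naturality square of the coprojection `A.right ⟶ (Under.pushout f).obj A` is a
pushout square. -/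
lemma isPushout_pushout_map [HasPushouts M] {X Y : M} (f : X ⟶ Y) {A A' : Under X}
    (g : A ⟶ A') :
    IsPushout (pushout.inl A.hom f) g.right ((Under.pushout f).map g).right
      (pushout.inl A'.hom f) := by
  have t : IsPushout f A.hom (pushout.inr A.hom f) (pushout.inl A.hom f) :=
    (IsPushout.of_hasPushout A.hom f).flip
  have s : IsPushout f (A.hom ≫ g.right)
      (pushout.inr A.hom f ≫ ((Under.pushout f).map g).right) (pushout.inl A'.hom f) := by
    have hr : pushout.inr A.hom f ≫ ((Under.pushout f).map g).right = pushout.inr A'.hom f := by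
      simp [Under.pushout]
      erw [pushout.inr_desc]
    rw [hr, Under.w g]
    exact (IsPushout.of_hasPushout A'.hom f).flip
  exact IsPushout.of_top s (by simp [Under.pushout]; erw [pushout.inl_desc]) t

/-- In a left proper model category `M` (with pushouts, so that the
left adjoints exist, and a terminal object, so that fibrancy makes sense), for any
weak equivalence `f : X ⟶ Y`, the adjunction `P_f : X/M ⇄ Y/M : U_f` — where
`P_f = Under.pushout f` is pushout along `f`, `U_f = Under.map f` is precomposition
with `f`, and the under categories carry the comma model structures — is a Quillen
equivalence: it is a Quillen adjunction, and for every cofibrant `A` in `X/M`,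
fibrant `B` in `Y/M` and morphism `g : P_f A ⟶ B`, `g` is a weak equivalence iff its
adjunct `A ⟶ U_f B` is one.  (An object `A` of `X/M` is cofibrant iff `X ⟶ A` is a
cofibration in `M`; an object `B` is fibrant iff `B ⟶ *` is a fibration in `M`.) -/
theorem stmt_11 [HasPushouts M] [HasTerminal M]
    (S : ModelStructure M) (hproper : LeftProper S)
    {X Y : M} (f : X ⟶ Y) (hf : S.W f)
    (TX : ModelStructure (Under X)) (hTX : IsCommaStructure S TX)
    (TY : ModelStructure (Under Y)) (hTY : IsCommaStructure S TY) :
    IsLeftQuillen TX TY (Under.pushout f) ∧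
    ∀ (A : Under X) (B : Under Y),
      S.Cof A.hom → S.Fib (terminal.from B.right) →
      ∀ g : (Under.pushout f).obj A ⟶ B,
        TY.W g ↔ TX.W ((Under.mapPushoutAdj f).homEquiv A B g) := by
  constructor
  · constructor
    · intro A A' g hg
      rw [hTY.2.2]
      exact cof_of_isPushout S (isPushout_pushout_map f g) ((hTX.2.2 g).mp hg)
    · intro A A' g hgC hgW
      have h := trivCof_of_isPushout S (isPushout_pushout_map f g)
        ((hTX.2.2 g).mp hgC) ((hTX.1 g).mp hgW)
      exact ⟨(hTY.2.2 _).mpr h.1, (hTY.1 _).mpr h.2⟩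
  · intro A B hA _ g
    have hinl : S.W (pushout.inl A.hom f) :=
      hproper f A.hom (pushout.inr A.hom f) (pushout.inl A.hom f)
        (IsPushout.of_hasPushout A.hom f).flip hf hA
    have hadj : ((Under.mapPushoutAdj f).homEquiv A B g).right =
        pushout.inl A.hom f ≫ g.right := by
      simp [Under.mapPushoutAdj]
      rfl
    rw [hTY.1, hTX.1, hadj]
    exact ⟨fun h => (S.two_of_three (pushout.inl A.hom f) g.right).1 hinl h,
      fun h => ((S.two_of_three (pushout.inl A.hom f) g.right).2.1) hinl h⟩
end
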